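/- For h > 0: I_{0,5}(h) = (5/8) h^2 I_{0,1}(h) - (5/12) h r^7 - (1/3) r^{11}, where r = sqrt((sqrt(1+4h)-1)/2) and I_{0,j}(h) = 2∫_r^{√h} (h-x^2)^{j/2} dx. -/

import Mathlib

open Real intervalIntegral

lemma sqrt_pow5 (u : ℝ) : Real.sqrt u ^ 5 = u ^ ((5:ℝ)/2) := by
  rcases le_or_gt 0 u with hu | hu
  · rw [Real.sqrt_eq_rpow, ← Real.rpow_natCast (u ^ ((1:ℝ)/2)) 5, ← Real.rpow_mul hu]
    norm_num
  · rw [Real.sqrt_eq_zero_of_nonpos hu.le, Real.rpow_def_of_neg hu]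
    have : Real.cos (5/2 * Real.pi) = 0 := by
      have : (5/2) * Real.pi = Real.pi/2 + 2*Real.pi := by ring
      rw [this, Real.cos_add_two_pi, Real.cos_pi_div_two]
    simp [this]

lemma sqrt_pow3 (u : ℝ) : Real.sqrt u ^ 3 = u ^ ((3:ℝ)/2) := by
  rcases le_or_gt 0 u with hu | hu
  · rw [Real.sqrt_eq_rpow, ← Real.rpow_natCast (u ^ ((1:ℝ)/2)) 3, ← Real.rpow_mul hu]
    norm_num
  · rw [Real.sqrt_eq_zero_of_nonpos hu.le, Real.rpow_def_of_neg hu]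
    have : Real.cos (3/2 * Real.pi) = 0 := by
      have : (3/2) * Real.pi = Real.pi + Real.pi/2 := by ring
      rw [this]
      simp [Real.cos_add]
    simp [this]

theorem stmt_7 (h : ℝ) (hh : 0 < h)
    (r : ℝ) (hr : r = Real.sqrt ((Real.sqrt (1 + 4 * h) - 1) / 2)) :
    (2 * ∫ x in r..(Real.sqrt h), Real.sqrt (h - x ^ 2) ^ 5) =
      (5 / 8) * h ^ 2 * (2 * ∫ x in r..(Real.sqrt h), Real.sqrt (h - x ^ 2)) -
        (5 / 12) * h * r ^ 7 - (1 / 3) * r ^ 11 := by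
  -- basic facts about r
  have hs1 : Real.sqrt (1 + 4 * h) ^ 2 = 1 + 4 * h := Real.sq_sqrt (by linarith)
  have hs1ge : (1:ℝ) ≤ Real.sqrt (1 + 4 * h) := by
    nlinarith [Real.sqrt_nonneg (1 + 4 * h)]
  have ht : (0:ℝ) ≤ (Real.sqrt (1 + 4 * h) - 1) / 2 := by linarith
  have hr2 : r ^ 2 = (Real.sqrt (1 + 4 * h) - 1) / 2 := by
    rw [hr, Real.sq_sqrt ht]
  have hkey : r ^ 2 + r ^ 4 = h := by
    have : r ^ 4 = (r ^ 2) ^ 2 := by ring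
    rw [this, hr2]; nlinarith
  have hrnn : 0 ≤ r := hr ▸ Real.sqrt_nonneg _
  have hrle : r ≤ Real.sqrt h := by
    have : r = Real.sqrt (r ^ 2) := (Real.sqrt_sq hrnn).symm
    rw [this]
    exact Real.sqrt_le_sqrt (by nlinarith)
  -- antiderivative
  set F : ℝ → ℝ := fun x => (1/6) * x * (h - x ^ 2) ^ ((5:ℝ)/2)
      + (5 * h / 24) * x * (h - x ^ 2) ^ ((3:ℝ)/2) with hF
  set f' : ℝ → ℝ := fun x => Real.sqrt (h - x ^ 2) ^ 5
      - (5/8) * h ^ 2 * Real.sqrt (h - x ^ 2) with hf'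
  have hderiv : ∀ x ∈ Set.uIcc r (Real.sqrt h), HasDerivAt F (f' x) x := by
    intro x hx
    rw [Set.uIcc_of_le hrle] at hx
    have hu : 0 ≤ h - x ^ 2 := by
      have hx2 : x ^ 2 ≤ Real.sqrt h ^ 2 := by
        have h0 : 0 ≤ x := le_trans hrnn hx.1
        nlinarith [hx.2]
      rw [Real.sq_sqrt hh.le] at hx2
      linarith
    have du : HasDerivAt (fun x : ℝ => h - x ^ 2) (-(2 * x ^ 1)) x :=
      (hasDerivAt_pow 2 x).const_sub h |>.congr_deriv (by norm_num)
    have d5 : HasDerivAt (fun x : ℝ => (h - x ^ 2) ^ ((5:ℝ)/2))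
        ((5/2) * (h - x ^ 2) ^ ((5:ℝ)/2 - 1) * (-(2 * x ^ 1))) x :=
      (Real.hasDerivAt_rpow_const (Or.inr (by norm_num))).comp x du
    have d3 : HasDerivAt (fun x : ℝ => (h - x ^ 2) ^ ((3:ℝ)/2))
        ((3/2) * (h - x ^ 2) ^ ((3:ℝ)/2 - 1) * (-(2 * x ^ 1))) x :=
      (Real.hasDerivAt_rpow_const (Or.inr (by norm_num))).comp x du
    have dF := (((hasDerivAt_id x).mul d5).const_mul (1/6)).add
        (((hasDerivAt_id x).mul d3).const_mul (5 * h / 24))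
    simp only [id_eq, Pi.mul_apply, Pi.add_def] at dF
    have hFeq : F = fun x : ℝ => 1/6 * (x * (h - x ^ 2) ^ ((5:ℝ)/2))
        + 5 * h / 24 * (x * (h - x ^ 2) ^ ((3:ℝ)/2)) := by
      funext y; rw [hF]; ring
    rw [hFeq]
    refine dF.congr_deriv (Eq.symm ?_)
    -- express everything in terms of s = sqrt (h - x^2)
    have e52 : ((5:ℝ)/2 - 1) = (3:ℝ)/2 := by norm_num
    have e32 : ((3:ℝ)/2 - 1) = (1:ℝ)/2 := by norm_num
    rw [hf', e52, e32]
    have s5 := sqrt_pow5 (h - x ^ 2)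
    have s3 := sqrt_pow3 (h - x ^ 2)
    have s1 := (Real.sqrt_eq_rpow (h - x ^ 2)).symm
    rw [← s5, ← s3, s1]
    have hs2 : Real.sqrt (h - x ^ 2) ^ 2 = h - x ^ 2 := Real.sq_sqrt hu
    linear_combination ((5/6) * Real.sqrt (h - x ^ 2) ^ 3
      + (5/8) * h * Real.sqrt (h - x ^ 2)) * hs2
  have hcont : Continuous f' := by
    rw [hf']; fun_prop
  have hint : IntervalIntegrable f' MeasureTheory.volume r (Real.sqrt h) :=
    hcont.intervalIntegrable _ _
  have hFTC := intervalIntegral.integral_eq_sub_of_hasDerivAt hderiv hint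
  -- split the integral
  have hc1 : Continuous fun x : ℝ => Real.sqrt (h - x ^ 2) ^ 5 := by fun_prop
  have hc2 : Continuous fun x : ℝ => (5/8) * h ^ 2 * Real.sqrt (h - x ^ 2) := by fun_prop
  have hsplit : (∫ x in r..(Real.sqrt h), f' x)
      = (∫ x in r..(Real.sqrt h), Real.sqrt (h - x ^ 2) ^ 5)
        - (5/8) * h ^ 2 * ∫ x in r..(Real.sqrt h), Real.sqrt (h - x ^ 2) := by
    rw [hf']
    rw [intervalIntegral.integral_sub (hc1.intervalIntegrable _ _) (hc2.intervalIntegrable _ _),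
      intervalIntegral.integral_const_mul]
  -- evaluate F at endpoints
  have hFb : F (Real.sqrt h) = 0 := by
    rw [hF]
    simp only
    rw [Real.sq_sqrt hh.le]
    simp [Real.zero_rpow (by norm_num : ((5:ℝ)/2) ≠ 0),
      Real.zero_rpow (by norm_num : ((3:ℝ)/2) ≠ 0)]
  have hur : h - r ^ 2 = (r ^ 2) ^ 2 := by nlinarith
  have hFa : F r = (1/6) * r ^ 11 + (5 * h / 24) * r ^ 7 := by
    rw [hF]
    simp only
    rw [hur, ← sqrt_pow5, ← sqrt_pow3, Real.sqrt_sq (sq_nonneg r)]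
    ring
  rw [hsplit, hFb, hFa] at hFTC
  linarith
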